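/- Let a > 0 and b be real numbers and let 0 ≤ x < 1. Then ∫_0^x u^{a−1} (1−u)^{b−1} du = (1/a) · x^a · (1−x)^b · Σ_{k=0}^{∞} (a+b)_k / (a+1)_k · x^k, where the series converges absolutely for 0 ≤ x < 1. -/

import Mathlib

open MeasureTheory Finset

/-- Pochhammer symbol `(a)_k = a (a+1) ⋯ (a+k-1)`. -/
noncomputable def poch (a : ℝ) (k : ℕ) : ℝ := (ascPochhammer ℝ k).eval a

noncomputable def ibhC (a b : ℝ) (k : ℕ) : ℝ := poch (a + b) k / poch (a + 1) k

lemma poch_zero (y : ℝ) : poch y 0 = 1 := by simp [poch]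

lemma poch_succ (y : ℝ) (k : ℕ) : poch y (k + 1) = poch y k * (y + k) := by
  simp [poch, ascPochhammer_succ_right]

lemma poch_pos {y : ℝ} (hy : 0 < y) (k : ℕ) : 0 < poch y k := by
  induction k with
  | zero => simp [poch_zero]
  | succ n ih => rw [poch_succ]; positivity

lemma ibhC_zero (a b : ℝ) : ibhC a b 0 = 1 := by simp [ibhC, poch_zero]

lemma ibhC_succ (a b : ℝ) (ha : 0 < a) (k : ℕ) :
    ibhC a b (k + 1) = ibhC a b k * ((a + b + k) / (a + 1 + k)) := by
  have h1 : (0:ℝ) < poch (a+1) k := poch_pos (by linarith) k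
  have h2 : (0:ℝ) < a + 1 + k := by positivity
  rw [ibhC, ibhC, poch_succ, poch_succ]
  field_simp

lemma ibhC_rec (a b : ℝ) (ha : 0 < a) (k : ℕ) :
    ibhC a b (k + 1) * (a + 1 + k) = ibhC a b k * (a + b + k) := by
  have h2 : (0:ℝ) < a + 1 + k := by positivity
  rw [ibhC_succ a b ha k]
  field_simp

lemma ibhC_abs_succ (a b : ℝ) (ha : 0 < a) (k : ℕ) :
    |ibhC a b (k+1)| = |ibhC a b k| * (|a + b + k| / (a + 1 + k)) := by
  rw [ibhC_succ a b ha k, abs_mul, abs_div, abs_of_pos (show (0:ℝ) < a+1+k by positivity)]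

open Filter in
lemma ibhC_summable (a b : ℝ) (ha : 0 < a) {C t : ℝ} (hC : 1 ≤ C) (ht0 : 0 ≤ t)
    (ht1 : t < 1) :
    Summable (fun k : ℕ => |ibhC a b k| * (k + C) * t ^ k) := by
  apply summable_of_ratio_norm_eventually_le (r := (1+t)/2) (by linarith)
  have hden : Tendsto (fun k : ℕ => a + 1 + (k:ℝ)) atTop atTop :=
    tendsto_atTop_add_const_left _ _ tendsto_natCast_atTop_atTop
  have hCden : Tendsto (fun k : ℕ => (k:ℝ) + C) atTop atTop :=
    tendsto_atTop_add_const_right _ _ tendsto_natCast_atTop_atTop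
  have h1 : Tendsto (fun k : ℕ => |a + b + (k:ℝ)| / (a + 1 + k)) atTop (nhds 1) := by
    have e1 : Tendsto (fun k : ℕ => 1 + (b - 1) / (a + 1 + (k:ℝ))) atTop (nhds 1) := by
      have := (tendsto_const_nhds (x := b - 1) (f := atTop (α := ℕ))).div_atTop hden
      simpa using tendsto_const_nhds.add this
    apply e1.congr'
    have hev : ∀ᶠ k : ℕ in atTop, -(a+b) ≤ (k:ℝ) := by
      exact tendsto_natCast_atTop_atTop.eventually_ge_atTop _
    filter_upwards [hev, hden.eventually_gt_atTop 0] with k hk hk2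
    rw [abs_of_nonneg (by linarith)]
    field_simp
    ring
  have h2 : Tendsto (fun k : ℕ => ((k:ℝ) + 1 + C) / ((k:ℝ) + C)) atTop (nhds 1) := by
    have e1 : Tendsto (fun k : ℕ => 1 + 1 / ((k:ℝ) + C)) atTop (nhds 1) := by
      have := (tendsto_const_nhds (x := (1:ℝ)) (f := atTop (α := ℕ))).div_atTop hCden
      simpa using tendsto_const_nhds.add this
    apply e1.congr'
    filter_upwards [hCden.eventually_gt_atTop 0] with k hk
    field_simp
    ring
  have hF : Tendsto (fun k : ℕ => |a + b + (k:ℝ)| / (a + 1 + k) *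
      (((k:ℝ) + 1 + C) / ((k:ℝ) + C)) * t) atTop (nhds t) := by
    have := (h1.mul h2).mul_const t
    simpa using this
  have hev := hF.eventually_lt_const (show t < (1+t)/2 by linarith)
  filter_upwards [hev] with k hk
  have hkC : (0:ℝ) < (k:ℝ) + C := by positivity
  have hfk : (0:ℝ) ≤ |ibhC a b k| * ((k:ℝ) + C) * t ^ k := by positivity
  have hnorm : ∀ m : ℕ, ‖|ibhC a b m| * ((m:ℝ) + C) * t ^ m‖ =
      |ibhC a b m| * ((m:ℝ) + C) * t ^ m := by
    intro m
    rw [Real.norm_eq_abs, abs_of_nonneg (by positivity)]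
  rw [hnorm, hnorm]
  have key : |ibhC a b (k+1)| * ((↑(k+1):ℝ) + C) * t ^ (k+1) =
      (|a + b + (k:ℝ)| / (a + 1 + k) * (((k:ℝ) + 1 + C) / ((k:ℝ) + C)) * t) *
      (|ibhC a b k| * ((k:ℝ) + C) * t ^ k) := by
    rw [ibhC_abs_succ a b ha k]
    push_cast
    field_simp
    ring
  rw [key]
  exact mul_le_mul_of_nonneg_right (le_of_lt hk) hfk

lemma ibhC_telescope (a b : ℝ) (ha : 0 < a) (u : ℝ) (n : ℕ) :
    ∑ k ∈ range n, ibhC a b k * ((a + k) * (1 - u) - b * u) * u ^ k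
      = a - ibhC a b n * (a + n) * u ^ n := by
  have h : ∀ k ∈ range n, ibhC a b k * ((a + k) * (1 - u) - b * u) * u ^ k
      = (fun k => ibhC a b k * (a + k) * u ^ k) k
        - (fun k => ibhC a b k * (a + k) * u ^ k) (k + 1) := by
    intro k _
    have hrec := ibhC_rec a b ha k
    push_cast
    linear_combination (u ^ (k+1)) * hrec
  rw [Finset.sum_congr rfl h, Finset.sum_range_sub']
  simp [ibhC_zero]

lemma ibh_hasDerivAt_term (a b : ℝ) (k : ℕ) {u : ℝ} (hu0 : 0 < u) (hu1 : u < 1) :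
    HasDerivAt (fun y : ℝ => y ^ (a + k) * (1 - y) ^ b)
      ((a + k) * u ^ (a + k - 1) * (1 - u) ^ b - b * u ^ (a + k) * (1 - u) ^ (b - 1)) u := by
  have h1 : HasDerivAt (fun y : ℝ => y ^ (a + (k:ℝ))) ((a + k) * u ^ (a + k - 1)) u :=
    Real.hasDerivAt_rpow_const (Or.inl hu0.ne')
  have hb : HasDerivAt (fun y : ℝ => 1 - y) (-1) u := by
    simpa using (hasDerivAt_id u).const_sub 1
  have h2 : HasDerivAt (fun y : ℝ => (1 - y) ^ b) ((-1) * b * (1 - u) ^ (b - 1)) u :=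
    hb.rpow_const (Or.inl (by linarith))
  have := h1.fun_mul h2
  refine this.congr_deriv ?_
  ring

open Filter in
theorem incomplete_beta_hypergeometric (a b : ℝ) (ha : 0 < a) (x : ℝ)
    (hx0 : 0 ≤ x) (hx1 : x < 1) :
    Summable (fun k : ℕ => |poch (a + b) k / poch (a + 1) k * x ^ k|) ∧
    ∫ u in (0:ℝ)..x, u ^ (a - 1) * (1 - u) ^ (b - 1) =
      (1 / a) * x ^ a * (1 - x) ^ b * ∑' k : ℕ, poch (a + b) k / poch (a + 1) k * x ^ k := by
  have habs : (fun k : ℕ => |poch (a + b) k / poch (a + 1) k * x ^ k|)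
      = fun k => |ibhC a b k| * x ^ k := by
    funext k
    rw [show poch (a+b) k / poch (a+1) k = ibhC a b k from rfl, abs_mul, abs_pow,
      abs_of_nonneg hx0]
  have hsumabs : Summable (fun k : ℕ => |ibhC a b k| * x ^ k) := by
    apply Summable.of_nonneg_of_le (f := fun k : ℕ => |ibhC a b k| * ((k:ℝ) + 1) * x ^ k)
      (fun k => by positivity) _ (ibhC_summable a b ha le_rfl hx0 hx1)
    intro k
    have h1 : (1:ℝ) ≤ (k:ℝ) + 1 := by
      have := Nat.cast_nonneg (α := ℝ) k; linarith
    have h2 := mul_le_mul_of_nonneg_right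
      (mul_le_mul_of_nonneg_left h1 (abs_nonneg (ibhC a b k))) (pow_nonneg hx0 k)
    simpa using h2
  refine ⟨by rw [habs]; exact hsumabs, ?_⟩
  have hT : (∑' k : ℕ, poch (a + b) k / poch (a + 1) k * x ^ k)
      = ∑' k : ℕ, ibhC a b k * x ^ k := rfl
  rw [hT]
  rcases hx0.eq_or_lt with h0 | hx
  · simp [← h0, Real.zero_rpow ha.ne']
  -- now 0 < x
  set I := ∫ u in (0:ℝ)..x, u ^ (a - 1) * (1 - u) ^ (b - 1) with hI
  set J : ℕ → ℝ := fun n => ∫ u in (0:ℝ)..x, u ^ (a-1) * ((1-u) ^ (b-1) * u ^ n) with hJ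
  set T := ∑' k : ℕ, ibhC a b k * x ^ k with hTdef
  have hcont1 : ContinuousOn (fun u : ℝ => (1-u) ^ (b-1)) (Set.Icc 0 x) :=
    ((continuous_const.sub continuous_id).continuousOn).rpow_const
      (fun u hu => Or.inl (by simp only [Set.mem_Icc] at hu; intro h; simp at h; linarith [hu.2]))
  have hIntJ : ∀ n : ℕ,
      IntervalIntegrable (fun u => u ^ (a-1) * ((1-u) ^ (b-1) * u ^ n)) volume 0 x := by
    intro n
    apply (intervalIntegral.intervalIntegrable_rpow' (by linarith : (-1:ℝ) < a - 1)).mul_continuousOn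
    rw [Set.uIcc_of_le hx0]
    exact hcont1.mul (continuous_pow n).continuousOn
  have hIntI : IntervalIntegrable (fun u => u ^ (a-1) * (1-u) ^ (b-1)) volume 0 x := by
    apply (intervalIntegral.intervalIntegrable_rpow' (by linarith : (-1:ℝ) < a - 1)).mul_continuousOn
    rw [Set.uIcc_of_le hx0]
    exact hcont1
  have key : ∀ n : ℕ, a * I - ibhC a b n * (a + n) * J n
      = ∑ k ∈ range n, ibhC a b k * (x ^ (a + (k:ℝ)) * (1-x) ^ b) := by
    intro n
    have hftc : (∫ u in (0:ℝ)..x, (a * (u ^ (a-1) * (1-u) ^ (b-1))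
          - ibhC a b n * (a+n) * (u ^ (a-1) * ((1-u) ^ (b-1) * u ^ n))))
        = (∑ k ∈ range n, ibhC a b k * (x ^ (a+(k:ℝ)) * (1-x) ^ b))
          - (∑ k ∈ range n, ibhC a b k * ((0:ℝ) ^ (a+(k:ℝ)) * (1-(0:ℝ)) ^ b)) := by
      apply intervalIntegral.integral_eq_sub_of_hasDeriv_right_of_le hx0
      · apply continuousOn_finset_sum
        intro k _
        apply continuousOn_const.mul
        apply ContinuousOn.mul
        · exact continuousOn_id.rpow_const (fun u hu => Or.inr (by positivity))
        · exact ((continuous_const.sub continuous_id).continuousOn).rpow_const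
            (fun u hu => Or.inl (by simp only [Set.mem_Icc] at hu; intro h; simp at h; linarith [hu.2]))
      · intro u hu
        have hu0 : 0 < u := hu.1
        have hu1 : u < 1 := lt_trans hu.2 hx1
        have h1u : (0:ℝ) < 1 - u := by linarith
        have hd : HasDerivAt (fun y : ℝ => ∑ k ∈ range n, ibhC a b k * (y ^ (a+(k:ℝ)) * (1-y) ^ b))
            (∑ k ∈ range n, ibhC a b k *
              ((a + k) * u ^ (a + k - 1) * (1 - u) ^ b - b * u ^ (a + k) * (1 - u) ^ (b - 1))) u :=
          HasDerivAt.fun_sum fun k _ => (ibh_hasDerivAt_term a b k hu0 hu1).const_mul (ibhC a b k)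
        have e1 : ∀ k : ℕ, u ^ (a + (k:ℝ) - 1) = u ^ (a-1) * u ^ k := fun k => by
          rw [show a + (k:ℝ) - 1 = (a-1) + (k:ℝ) by ring, Real.rpow_add hu0, Real.rpow_natCast]
        have e2 : ∀ k : ℕ, u ^ (a + (k:ℝ)) = u ^ (a-1) * u ^ k * u := fun k => by
          rw [show a + (k:ℝ) = (a + (k:ℝ) - 1) + 1 by ring, Real.rpow_add hu0, Real.rpow_one, e1 k]
        have e3 : (1-u) ^ b = (1-u) ^ (b-1) * (1-u) := by
          rw [show b = (b-1) + 1 by ring]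
          rw [Real.rpow_add h1u, Real.rpow_one]
          ring_nf
        have heq : (∑ k ∈ range n, ibhC a b k *
              ((a + k) * u ^ (a + k - 1) * (1 - u) ^ b - b * u ^ (a + k) * (1 - u) ^ (b - 1)))
            = a * (u ^ (a-1) * (1-u) ^ (b-1))
              - ibhC a b n * (a+n) * (u ^ (a-1) * ((1-u) ^ (b-1) * u ^ n)) := by
          calc (∑ k ∈ range n, ibhC a b k *
              ((a + k) * u ^ (a + k - 1) * (1 - u) ^ b - b * u ^ (a + k) * (1 - u) ^ (b - 1)))
              = ∑ k ∈ range n, u ^ (a-1) * (1-u) ^ (b-1) *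
                  (ibhC a b k * ((a + k) * (1 - u) - b * u) * u ^ k) := by
                apply Finset.sum_congr rfl
                intro k _
                rw [e1 k, e2 k, e3]
                ring
            _ = u ^ (a-1) * (1-u) ^ (b-1) *
                  (∑ k ∈ range n, ibhC a b k * ((a + k) * (1 - u) - b * u) * u ^ k) := by
                rw [Finset.mul_sum]
            _ = u ^ (a-1) * (1-u) ^ (b-1) * (a - ibhC a b n * (a + n) * u ^ n) := by
                rw [ibhC_telescope a b ha]
            _ = _ := by ring
        rw [heq] at hd
        exact hd.hasDerivWithinAt
      · exact (hIntI.const_mul a).sub ((hIntJ n).const_mul _)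
    rw [intervalIntegral.integral_sub (hIntI.const_mul a) ((hIntJ n).const_mul _),
      intervalIntegral.integral_const_mul, intervalIntegral.integral_const_mul] at hftc
    have hzero : ∀ k ∈ range n, ibhC a b k * ((0:ℝ) ^ (a+(k:ℝ)) * (1-(0:ℝ)) ^ b) = 0 := by
      intro k _
      rw [Real.zero_rpow (by positivity : a + (k:ℝ) ≠ 0)]
      ring
    rw [Finset.sum_eq_zero hzero, sub_zero] at hftc
    exact hftc
  have hJ0 : ∀ n, 0 ≤ J n := by
    intro n
    apply intervalIntegral.integral_nonneg hx0
    intro u hu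
    have h1 : (0:ℝ) ≤ u ^ (a-1) := Real.rpow_nonneg hu.1 _
    have h2 : (0:ℝ) ≤ (1-u) ^ (b-1) := Real.rpow_nonneg (by linarith [hu.2]) _
    exact mul_nonneg h1 (mul_nonneg h2 (pow_nonneg hu.1 n))
  have hI0 : 0 ≤ I := by
    apply intervalIntegral.integral_nonneg hx0
    intro u hu
    exact mul_nonneg (Real.rpow_nonneg hu.1 _) (Real.rpow_nonneg (by linarith [hu.2]) _)
  have hJle : ∀ n, J n ≤ x ^ n * I := by
    intro n
    have hle : J n ≤ ∫ u in (0:ℝ)..x, x ^ n * (u ^ (a-1) * (1-u) ^ (b-1)) := by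
      apply intervalIntegral.integral_mono_on hx0 (hIntJ n) (hIntI.const_mul _)
      intro u hu
      have hun : u ^ n ≤ x ^ n := pow_le_pow_left₀ hu.1 hu.2 n
      have h1 : (0:ℝ) ≤ u ^ (a-1) := Real.rpow_nonneg hu.1 _
      have h2 : (0:ℝ) ≤ (1-u) ^ (b-1) := Real.rpow_nonneg (by linarith [hu.2]) _
      calc u ^ (a-1) * ((1-u) ^ (b-1) * u ^ n) = (u ^ (a-1) * (1-u) ^ (b-1)) * u ^ n := by ring
        _ ≤ (u ^ (a-1) * (1-u) ^ (b-1)) * x ^ n :=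
            mul_le_mul_of_nonneg_left hun (mul_nonneg h1 h2)
        _ = x ^ n * (u ^ (a-1) * (1-u) ^ (b-1)) := by ring
    rwa [intervalIntegral.integral_const_mul] at hle
  have hrem : Tendsto (fun n => ibhC a b n * (a + n) * J n) atTop (nhds 0) := by
    apply squeeze_zero_norm (a := fun n => (|ibhC a b n| * ((n:ℝ) + (a+1)) * x ^ n) * I)
    · intro n
      have han : (0:ℝ) < a + n := by positivity
      rw [Real.norm_eq_abs, abs_mul, abs_mul, abs_of_nonneg (hJ0 n), abs_of_pos han]
      calc |ibhC a b n| * (a + (n:ℝ)) * J n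
          ≤ |ibhC a b n| * ((n:ℝ) + (a+1)) * (x ^ n * I) := by
            apply mul_le_mul
            · exact mul_le_mul_of_nonneg_left (by linarith) (abs_nonneg _)
            · exact hJle n
            · exact hJ0 n
            · positivity
        _ = (|ibhC a b n| * ((n:ℝ) + (a+1)) * x ^ n) * I := by ring
    · have hs := (ibhC_summable a b ha (C := a+1) (by linarith) hx0 hx1).tendsto_atTop_zero
      simpa using hs.mul_const I
  have htend1 : Tendsto (fun n => a * I - ibhC a b n * (a + n) * J n) atTop (nhds (a * I)) := by
    simpa using tendsto_const_nhds.sub hrem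
  have hsum2 : Summable (fun k : ℕ => ibhC a b k * x ^ k) := by
    apply Summable.of_abs
    have : (fun k : ℕ => |ibhC a b k * x ^ k|) = fun k => |ibhC a b k| * x ^ k := by
      funext k; rw [abs_mul, abs_pow, abs_of_nonneg hx0]
    rw [this]
    exact hsumabs
  have htend2 : Tendsto (fun n => ∑ k ∈ range n, ibhC a b k * (x ^ (a+(k:ℝ)) * (1-x) ^ b))
      atTop (nhds (x ^ a * (1-x) ^ b * T)) := by
    have h1 := hsum2.hasSum.tendsto_sum_nat
    have h2 := h1.const_mul (x ^ a * (1-x) ^ b)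
    apply h2.congr
    intro n
    rw [Finset.mul_sum]
    apply Finset.sum_congr rfl
    intro k _
    rw [show x ^ (a + (k:ℝ)) = x ^ a * x ^ k by
      rw [Real.rpow_add hx, Real.rpow_natCast]]
    ring
  have hfinal : a * I = x ^ a * (1-x) ^ b * T :=
    tendsto_nhds_unique (htend1.congr key) htend2
  field_simp
  linear_combination hfinal
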